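/- In the multi-target detection model with an arbitrary spacing distribution (non-overlap condition s_k − s_{k−1} ≥ L), for all 0 ≤ l₁ ≤ l₂ ≤ L−1 the deterministic identity a³_{s∗x}[l₁, l₂] = ρ₀ a_x³[l₁, l₂] + ((M−1)L/N) ( Σ_{j=L}^{L+l₂−l₁−1} ξ[j] a_x³[j−l₂, j+l₁−l₂] + Σ_{j=L}^{L+l₁−1} ξ[j] a_x³[l₂−l₁, j−l₁] ) holds, where ξ is the pair separation function of s. -/

import Mathlib

/-- The sequence `z` of length `m`, zero-padded to all of `ℤ`. -/
noncomputable def zpad (m : ℕ) (z : ℕ → ℝ) : ℤ → ℝ :=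
  fun i => if 0 ≤ i ∧ i < (m : ℤ) then z i.toNat else 0

/-- Third-order autocorrelation of the length-`m` sequence `z` with integer shifts `l₁, l₂`:
`a_z³[l₁,l₂] = (1/m) Σ_{i=0}^{m−1} z[i] z[i+l₁] z[i+l₂]`, with `z` extended by zero. -/
noncomputable def acorr3 (m : ℕ) (z : ℕ → ℝ) (l₁ l₂ : ℤ) : ℝ :=
  (1 / (m : ℝ)) * ∑ i ∈ Finset.range m, zpad m z i * zpad m z (i + l₁) * zpad m z (i + l₂)

/-- The (zero-padded) linear convolution `s∗x` of the binary sequence `s` with the signal `x`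
of length `L`, where `s` has `M` nonzero entries at the positions `p 0 < p 1 < ⋯ < p (M−1)`:
`(s∗x)[i] = Σ_k x[i − p k]`, with `x` extended by zero. -/
noncomputable def sconv (L M : ℕ) (x : ℕ → ℝ) (p : Fin M → ℕ) : ℤ → ℝ :=
  fun i => ∑ k : Fin M, zpad L x (i - (p k : ℤ))

/-- The pair separation function `ξ[j]` of the binary sequence with `M` nonzero entries at the
positions `p 0 < p 1 < ⋯ < p (M−1)`:
`ξ[j] = (1/(M−1)) · #{k ∈ {1,…,M−1} : p k − p (k−1) = j}`. -/
noncomputable def pairSep (M : ℕ) (p : Fin M → ℕ) (j : ℕ) : ℝ :=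
  (Finset.univ.filter (fun k : Fin (M - 1) =>
      p ⟨(k : ℕ) + 1, by have := k.isLt; omega⟩ = p ⟨(k : ℕ), by have := k.isLt; omega⟩ + j)).card
    / ((M : ℝ) - 1)

lemma zpad_eq_zero' {m : ℕ} {z : ℕ → ℝ} {i : ℤ} (h : ¬(0 ≤ i ∧ i < (m : ℤ))) :
    zpad m z i = 0 := by
  simp only [zpad, if_neg h]

lemma zpad_ne_zero' {m : ℕ} {z : ℕ → ℝ} {i : ℤ} (h : zpad m z i ≠ 0) :
    0 ≤ i ∧ i < (m : ℤ) := by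
  by_contra hc
  exact h (zpad_eq_zero' hc)

lemma sum_range_int (g : ℤ → ℝ) (n : ℕ) :
    ∑ i ∈ Finset.range n, g (i : ℤ) = ∑ i ∈ Finset.Ico (0 : ℤ) (n : ℤ), g i := by
  have h : Finset.Ico (0:ℤ) (n:ℤ)
      = (Finset.range n).map ⟨(Nat.cast : ℕ → ℤ), Nat.cast_injective⟩ := by
    ext i
    simp only [Finset.mem_Ico, Finset.mem_map, Finset.mem_range, Function.Embedding.coeFn_mk]
    constructor
    · rintro ⟨h0, hn⟩
      exact ⟨i.toNat, by omega, by omega⟩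
    · rintro ⟨a, ha, rfl⟩
      omega
  rw [h, Finset.sum_map]
  rfl

lemma sum_Ico_shift' (g : ℤ → ℝ) (c : ℤ) (m : ℕ) :
    ∑ i ∈ Finset.Ico c (c + (m:ℤ)), g i = ∑ i ∈ Finset.Ico (0:ℤ) (m:ℤ), g (i + c) := by
  rw [show Finset.Ico c (c + (m:ℤ)) = Finset.Ico ((0:ℤ)+c) ((m:ℤ)+c) by
        rw [zero_add, add_comm (m:ℤ) c],
    ← Finset.map_add_right_Ico, Finset.sum_map]
  rfl

lemma key_sum (L N : ℕ) (hL : 0 < L) (x : ℕ → ℝ) (c a b : ℤ)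
    (hc : 0 ≤ c) (hcN : c + L ≤ (N : ℤ)) :
    ∑ i ∈ Finset.range N,
        zpad L x ((i : ℤ) - c) * zpad L x ((i : ℤ) - c + a) * zpad L x ((i : ℤ) - c + b)
      = (L : ℝ) * acorr3 L x a b := by
  have h1 := sum_range_int (fun i => zpad L x (i - c) * zpad L x (i - c + a) * zpad L x (i - c + b)) N
  rw [h1]
  have h2 : ∑ i ∈ Finset.Ico (0:ℤ) (N:ℤ),
      zpad L x (i - c) * zpad L x (i - c + a) * zpad L x (i - c + b)
      = ∑ i ∈ Finset.Ico c (c + (L:ℤ)),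
      zpad L x (i - c) * zpad L x (i - c + a) * zpad L x (i - c + b) := by
    symm
    apply Finset.sum_subset
    · intro i hi
      simp only [Finset.mem_Ico] at *
      omega
    · intro i hi hni
      simp only [Finset.mem_Ico] at hi hni
      rw [zpad_eq_zero' (by omega), zero_mul, zero_mul]
  rw [h2, sum_Ico_shift' (fun i => zpad L x (i - c) * zpad L x (i - c + a) * zpad L x (i - c + b)) c L]
  simp only [add_sub_cancel_right]
  rw [acorr3, sum_range_int (fun i => zpad L x i * zpad L x (i + a) * zpad L x (i + b)) L]
  have hL0 : (L:ℝ) ≠ 0 := by positivity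
  field_simp

lemma acorr3_vanish (L : ℕ) (x : ℕ → ℝ) (a b : ℤ) (hb : (L : ℤ) ≤ b) :
    acorr3 L x a b = 0 := by
  rw [acorr3, Finset.sum_eq_zero, mul_zero]
  intro i _
  rw [zpad_eq_zero' (i := (i:ℤ) + b) (by omega), mul_zero]

lemma count_sum (n : ℕ) (q : Fin n → ℕ) (g : ℕ → ℝ) (L0 u : ℕ)
    (hlb : ∀ k, L0 ≤ q k) (hv : ∀ j, u ≤ j → g j = 0) :
    ∑ k : Fin n, g (q k)
      = ∑ j ∈ Finset.Ico L0 u, ((Finset.univ.filter (fun k => q k = j)).card : ℝ) * g j := by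
  classical
  have h1 : ∑ k : Fin n, g (q k)
      = ∑ k ∈ Finset.univ.filter (fun k => q k < u), g (q k) := by
    symm
    apply Finset.sum_subset (Finset.filter_subset _ _)
    intro k _ hk
    simp only [Finset.mem_filter, Finset.mem_univ, true_and, not_lt] at hk
    exact hv _ hk
  have hmaps : ∀ k ∈ Finset.univ.filter (fun k => q k < u), q k ∈ Finset.Ico L0 u := by
    intro k hk
    simp only [Finset.mem_filter, Finset.mem_univ, true_and] at hk
    exact Finset.mem_Ico.mpr ⟨hlb k, hk⟩
  rw [h1, ← Finset.sum_fiberwise_of_maps_to hmaps (fun k => g (q k))]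
  apply Finset.sum_congr rfl
  intro j hj
  have hju : j < u := (Finset.mem_Ico.mp hj).2
  have hfe : (Finset.univ.filter (fun k => q k < u)).filter (fun k => q k = j)
      = Finset.univ.filter (fun k => q k = j) := by
    rw [Finset.filter_filter]
    apply Finset.filter_congr
    intro k _
    constructor
    · exact fun h => h.2
    · exact fun h => ⟨by omega, h⟩
  rw [hfe]
  calc ∑ k ∈ Finset.univ.filter (fun k => q k = j), g (q k)
      = ∑ _k ∈ Finset.univ.filter (fun k => q k = j), g j :=
        Finset.sum_congr rfl (fun k hk => by rw [(Finset.mem_filter.mp hk).2])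
    _ = ((Finset.univ.filter (fun k => q k = j)).card : ℝ) * g j := by
        rw [Finset.sum_const, nsmul_eq_mul]

/-- Multi-target detection with an arbitrary spacing distribution (non-overlap condition:
consecutive occurrences separated by at least `L`): for all `0 ≤ l₁ ≤ l₂ ≤ L−1`,
`a³_{s∗x}[l₁,l₂] = ρ₀ a_x³[l₁,l₂] + ((M−1)L/N) ( Σ_{j=L}^{L+l₂−l₁−1} ξ[j] a_x³[j−l₂, j+l₁−l₂]
+ Σ_{j=L}^{L+l₁−1} ξ[j] a_x³[l₂−l₁, j−l₁] )`, where `ρ₀ = ML/N` and `ξ` is the pair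
separation function of `s`. -/
theorem mtd_third_order_arbitrary_spacing
    (L N M : ℕ) (hL : 0 < L) (hLN : L ≤ N) (hM : 2 ≤ M)
    (x : ℕ → ℝ) (p : Fin M → ℕ)
    (hsep : ∀ k : ℕ, ∀ hk : k + 1 < M, p ⟨k, by omega⟩ + L ≤ p ⟨k + 1, hk⟩)
    (hin : ∀ k : Fin M, p k + L ≤ N)
    (l₁ l₂ : ℕ) (hl₁₂ : l₁ ≤ l₂) (hl₂ : l₂ < L) :
    (1 / (N : ℝ)) *
        ∑ i ∈ Finset.range N, sconv L M x p i * sconv L M x p (i + l₁) * sconv L M x p (i + l₂)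
      = ((M : ℝ) * L / N) * acorr3 L x l₁ l₂
        + (((M : ℝ) - 1) * L / N) *
            ((∑ j ∈ Finset.Ico L (L + (l₂ - l₁)),
                pairSep M p j * acorr3 L x ((j : ℤ) - l₂) ((j : ℤ) + l₁ - l₂))
              + ∑ j ∈ Finset.Ico L (L + l₁),
                  pairSep M p j * acorr3 L x ((l₂ : ℤ) - l₁) ((j : ℤ) - l₁)) := by
  classical
  obtain ⟨M', rfl⟩ : ∃ M', M = M' + 1 := ⟨M - 1, by omega⟩
  have hM' : 1 ≤ M' := by omega
  have hN0 : 0 < N := lt_of_lt_of_le hL hLN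
  -- gap facts
  have pgap0 : ∀ bn : ℕ, ∀ hb : bn < M' + 1, ∀ an : ℕ, ∀ ha : an < M' + 1,
      an < bn → p ⟨an, ha⟩ + L ≤ p ⟨bn, hb⟩ := by
    intro bn
    induction bn with
    | zero => intro _ _ _ h; omega
    | succ n ih =>
      intro hb an ha h
      have hn : n < M' + 1 := by omega
      have hstep : p ⟨n, hn⟩ + L ≤ p ⟨n + 1, hb⟩ := hsep n hb
      rcases Nat.lt_or_ge an n with h' | h'
      · have := ih hn an ha h'
        omega
      · have han : an = n := by omega
        subst han
        exact hstep
  have pgap : ∀ a b : Fin (M' + 1), (a : ℕ) < (b : ℕ) → p a + L ≤ p b :=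
    fun a b h => pgap0 b.1 b.2 a.1 a.2 h
  -- separation function in convenient form
  set q : Fin M' → ℕ := fun k => p k.succ - p k.castSucc with hqdef
  have hgapk : ∀ k : Fin M', p k.castSucc + L ≤ p k.succ := by
    intro k
    apply pgap
    rw [Fin.coe_castSucc, Fin.val_succ]
    omega
  have hq : ∀ k : Fin M', p k.succ = p k.castSucc + q k := by
    intro k
    have := hgapk k
    simp only [hqdef]
    omega
  have hqL : ∀ k : Fin M', L ≤ q k := by
    intro k
    have h1 := hgapk k
    have h2 := hq k
    omega
  -- expansion of the first factor
  have hexp : ∀ i : ℕ,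
      sconv L (M'+1) x p ↑i * sconv L (M'+1) x p ((i:ℤ) + l₁) * sconv L (M'+1) x p ((i:ℤ) + l₂)
      = ∑ k : Fin (M'+1),
          zpad L x ((i:ℤ) - p k) * sconv L (M'+1) x p ((i:ℤ) + l₁) * sconv L (M'+1) x p ((i:ℤ) + l₂) := by
    intro i
    conv_lhs => rw [show sconv L (M'+1) x p ↑i = ∑ k : Fin (M'+1), zpad L x ((i:ℤ) - p k) from rfl]
    rw [Finset.sum_mul, Finset.sum_mul]
  have hsplit : ∑ i ∈ Finset.range N,
      sconv L (M'+1) x p ↑i * sconv L (M'+1) x p ((i:ℤ) + l₁) * sconv L (M'+1) x p ((i:ℤ) + l₂)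
      = ∑ k : Fin (M'+1), ∑ i ∈ Finset.range N,
          zpad L x ((i:ℤ) - p k) * sconv L (M'+1) x p ((i:ℤ) + l₁) * sconv L (M'+1) x p ((i:ℤ) + l₂) := by
    rw [Finset.sum_congr rfl (fun i _ => hexp i)]
    exact Finset.sum_comm
  -- pointwise middle reduction
  have hmid : ∀ (k : Fin M') (i : ℕ),
      zpad L x ((i:ℤ) - p k.castSucc) * sconv L (M'+1) x p ((i:ℤ) + l₁) * sconv L (M'+1) x p ((i:ℤ) + l₂)
      = zpad L x ((i:ℤ) - p k.castSucc) * zpad L x ((i:ℤ) + l₁ - p k.castSucc) * zpad L x ((i:ℤ) + l₂ - p k.castSucc)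
      + zpad L x ((i:ℤ) - p k.castSucc) * zpad L x ((i:ℤ) + l₁ - p k.castSucc) * zpad L x ((i:ℤ) + l₂ - p k.succ)
      + zpad L x ((i:ℤ) - p k.castSucc) * zpad L x ((i:ℤ) + l₁ - p k.succ) * zpad L x ((i:ℤ) + l₂ - p k.succ) := by
    intro k i
    have hcs : (k.castSucc : ℕ) = (k : ℕ) := Fin.coe_castSucc k
    have hscv : (k.succ : ℕ) = (k : ℕ) + 1 := Fin.val_succ k
    by_cases h0 : zpad L x ((i:ℤ) - p k.castSucc) = 0
    · rw [h0]; ring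
    · obtain ⟨hi1, hi2⟩ := zpad_ne_zero' h0
      have key : ∀ l : ℕ, l < L → sconv L (M'+1) x p ((i:ℤ) + l)
          = zpad L x ((i:ℤ) + l - p k.castSucc) + zpad L x ((i:ℤ) + l - p k.succ) := by
        intro l hl
        rw [show sconv L (M'+1) x p ((i:ℤ) + l)
            = ∑ k' : Fin (M'+1), zpad L x ((i:ℤ) + l - p k') from rfl]
        apply Fintype.sum_eq_add k.castSucc k.succ
        · intro he
          have : (k.castSucc : ℕ) = (k.succ : ℕ) := by rw [he]
          omega
        · intro k' hk'
          obtain ⟨hk1, hk2⟩ := hk'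
          apply zpad_eq_zero'
          have hv1 : (k' : ℕ) ≠ (k.castSucc : ℕ) := fun h => hk1 (Fin.ext h)
          have hv2 : (k' : ℕ) ≠ (k.succ : ℕ) := fun h => hk2 (Fin.ext h)
          rcases Nat.lt_or_ge (k' : ℕ) ((k:ℕ)) with hlt | hge
          · have hg := pgap k' k.castSucc (by omega)
            omega
          · have hgt : (k.succ : ℕ) < (k' : ℕ) := by omega
            have hg2 := hgapk k
            have hg := pgap k.succ k' hgt
            omega
      have e1 := key l₁ (by omega)
      have e2 := key l₂ hl₂
      rw [e1, e2]
      have hz : zpad L x ((i:ℤ) + l₁ - p k.succ) * zpad L x ((i:ℤ) + l₂ - p k.castSucc) = 0 := by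
        by_cases hbz : zpad L x ((i:ℤ) + l₁ - p k.succ) = 0
        · rw [hbz, zero_mul]
        · obtain ⟨hb1, hb2⟩ := zpad_ne_zero' hbz
          have hg2 := hgapk k
          rw [zpad_eq_zero' (i := (i:ℤ) + l₂ - p k.castSucc) (by omega), mul_zero]
      linear_combination zpad L x ((i:ℤ) - p k.castSucc) * hz
  -- pointwise last reduction
  have hlast : ∀ i : ℕ,
      zpad L x ((i:ℤ) - p (Fin.last M')) * sconv L (M'+1) x p ((i:ℤ) + l₁) * sconv L (M'+1) x p ((i:ℤ) + l₂)
      = zpad L x ((i:ℤ) - p (Fin.last M')) * zpad L x ((i:ℤ) + l₁ - p (Fin.last M'))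
          * zpad L x ((i:ℤ) + l₂ - p (Fin.last M')) := by
    intro i
    by_cases h0 : zpad L x ((i:ℤ) - p (Fin.last M')) = 0
    · rw [h0]; ring
    · obtain ⟨hi1, hi2⟩ := zpad_ne_zero' h0
      have key : ∀ l : ℕ, sconv L (M'+1) x p ((i:ℤ) + l)
          = zpad L x ((i:ℤ) + l - p (Fin.last M')) := by
        intro l
        rw [show sconv L (M'+1) x p ((i:ℤ) + l)
            = ∑ k' : Fin (M'+1), zpad L x ((i:ℤ) + l - p k') from rfl]
        apply Fintype.sum_eq_single
        intro k' hk'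
        apply zpad_eq_zero'
        have hlastv : (Fin.last M' : ℕ) = M' := rfl
        have hv : (k' : ℕ) ≠ M' := fun h => hk' (Fin.ext (by rw [h, hlastv]))
        have hk2 : (k' : ℕ) < M' := by have := k'.isLt; omega
        have hg := pgap k' (Fin.last M') (by omega)
        omega
      rw [key l₁, key l₂]
  -- the three block sums
  have hT1 : ∀ c : ℕ, c + L ≤ N → ∑ i ∈ Finset.range N,
      zpad L x ((i:ℤ) - c) * zpad L x ((i:ℤ) + l₁ - c) * zpad L x ((i:ℤ) + l₂ - c)
      = (L:ℝ) * acorr3 L x l₁ l₂ := by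
    intro c hc
    rw [← key_sum L N hL x (c:ℤ) l₁ l₂ (by positivity) (by omega)]
    apply Finset.sum_congr rfl
    intro i _
    rw [show (i:ℤ) + l₁ - c = (i:ℤ) - c + l₁ by ring,
        show (i:ℤ) + l₂ - c = (i:ℤ) - c + l₂ by ring]
  have hT2 : ∀ k : Fin M', ∑ i ∈ Finset.range N,
      zpad L x ((i:ℤ) - p k.castSucc) * zpad L x ((i:ℤ) + l₁ - p k.castSucc)
        * zpad L x ((i:ℤ) + l₂ - p k.succ)
      = (L:ℝ) * acorr3 L x ((q k : ℤ) - l₂) ((q k : ℤ) + l₁ - l₂) := by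
    intro k
    have hqk := hq k
    have hqLk := hqL k
    have hink := hin k.succ
    rw [← key_sum L N hL x ((p k.succ : ℤ) - l₂) ((q k:ℤ) - l₂) ((q k:ℤ) + l₁ - l₂)
        (by omega) (by omega)]
    apply Finset.sum_congr rfl
    intro i _
    rw [show (i:ℤ) - p k.castSucc = (i:ℤ) - ((p k.succ:ℤ) - l₂) + ((q k:ℤ) - l₂) by
          rw [hqk]; push_cast; ring,
        show (i:ℤ) + l₁ - p k.castSucc = (i:ℤ) - ((p k.succ:ℤ) - l₂) + ((q k:ℤ) + l₁ - l₂) by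
          rw [hqk]; push_cast; ring,
        show (i:ℤ) + l₂ - p k.succ = (i:ℤ) - ((p k.succ:ℤ) - l₂) by ring]
    ring
  have hT3 : ∀ k : Fin M', ∑ i ∈ Finset.range N,
      zpad L x ((i:ℤ) - p k.castSucc) * zpad L x ((i:ℤ) + l₁ - p k.succ)
        * zpad L x ((i:ℤ) + l₂ - p k.succ)
      = (L:ℝ) * acorr3 L x ((l₂:ℤ) - l₁) ((q k : ℤ) - l₁) := by
    intro k
    have hqk := hq k
    have hqLk := hqL k
    have hink := hin k.succ
    rw [← key_sum L N hL x ((p k.succ : ℤ) - l₁) ((l₂:ℤ) - l₁) ((q k:ℤ) - l₁)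
        (by omega) (by omega)]
    apply Finset.sum_congr rfl
    intro i _
    rw [show (i:ℤ) - p k.castSucc = (i:ℤ) - ((p k.succ:ℤ) - l₁) + ((q k:ℤ) - l₁) by
          rw [hqk]; push_cast; ring,
        show (i:ℤ) + l₁ - p k.succ = (i:ℤ) - ((p k.succ:ℤ) - l₁) by ring,
        show (i:ℤ) + l₂ - p k.succ = (i:ℤ) - ((p k.succ:ℤ) - l₁) + ((l₂:ℤ) - l₁) by ring]
    ring
  -- per-k values
  have hWmid : ∀ k : Fin M',
      ∑ i ∈ Finset.range N, zpad L x ((i:ℤ) - p k.castSucc)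
          * sconv L (M'+1) x p ((i:ℤ) + l₁) * sconv L (M'+1) x p ((i:ℤ) + l₂)
      = (L:ℝ) * acorr3 L x l₁ l₂
        + (L:ℝ) * acorr3 L x ((q k : ℤ) - l₂) ((q k : ℤ) + l₁ - l₂)
        + (L:ℝ) * acorr3 L x ((l₂:ℤ) - l₁) ((q k : ℤ) - l₁) := by
    intro k
    rw [Finset.sum_congr rfl (fun i _ => hmid k i), Finset.sum_add_distrib, Finset.sum_add_distrib,
        hT1 (p k.castSucc) (hin k.castSucc), hT2 k, hT3 k]
  have hWlast : ∑ i ∈ Finset.range N, zpad L x ((i:ℤ) - p (Fin.last M'))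
          * sconv L (M'+1) x p ((i:ℤ) + l₁) * sconv L (M'+1) x p ((i:ℤ) + l₂)
      = (L:ℝ) * acorr3 L x l₁ l₂ := by
    rw [Finset.sum_congr rfl (fun i _ => hlast i)]
    exact hT1 (p (Fin.last M')) (hin (Fin.last M'))
  -- counting
  have hcount1 : ∑ k : Fin M', (L:ℝ) * acorr3 L x ((q k : ℤ) - l₂) ((q k : ℤ) + l₁ - l₂)
      = ∑ j ∈ Finset.Ico L (L + (l₂ - l₁)),
          ((Finset.univ.filter (fun k => q k = j)).card : ℝ)
            * ((L:ℝ) * acorr3 L x ((j:ℤ) - l₂) ((j:ℤ) + l₁ - l₂)) :=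
    count_sum M' q (fun j => (L:ℝ) * acorr3 L x ((j:ℤ) - l₂) ((j:ℤ) + l₁ - l₂)) L (L + (l₂ - l₁))
      hqL (fun j hj => by
        show (L:ℝ) * acorr3 L x ((j:ℤ) - l₂) ((j:ℤ) + l₁ - l₂) = 0
        rw [acorr3_vanish L x _ _ (by omega), mul_zero])
  have hcount2 : ∑ k : Fin M', (L:ℝ) * acorr3 L x ((l₂:ℤ) - l₁) ((q k : ℤ) - l₁)
      = ∑ j ∈ Finset.Ico L (L + l₁),
          ((Finset.univ.filter (fun k => q k = j)).card : ℝ)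
            * ((L:ℝ) * acorr3 L x ((l₂:ℤ) - l₁) ((j:ℤ) - l₁)) :=
    count_sum M' q (fun j => (L:ℝ) * acorr3 L x ((l₂:ℤ) - l₁) ((j:ℤ) - l₁)) L (L + l₁)
      hqL (fun j hj => by
        show (L:ℝ) * acorr3 L x ((l₂:ℤ) - l₁) ((j:ℤ) - l₁) = 0
        rw [acorr3_vanish L x _ _ (by omega), mul_zero])
  -- pairSep in terms of the counting function
  have hps : ∀ j : ℕ, pairSep (M'+1) p j
      = ((Finset.univ.filter (fun k : Fin M' => p k.succ = p k.castSucc + j)).card : ℝ)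
          / (((M'+1 : ℕ) : ℝ) - 1) := by
    intro j
    unfold pairSep
    rfl
  have hfilter : ∀ j : ℕ, (Finset.univ.filter (fun k : Fin M' => p k.succ = p k.castSucc + j))
      = (Finset.univ.filter (fun k : Fin M' => q k = j)) := by
    intro j
    apply Finset.filter_congr
    intro k _
    have := hq k
    constructor
    · intro h; omega
    · intro h; omega
  have hps' : ∀ j : ℕ, pairSep (M'+1) p j
      = ((Finset.univ.filter (fun k : Fin M' => q k = j)).card : ℝ) / (M' : ℝ) := by
    intro j
    rw [hps j, hfilter j]
    congr 1
    push_cast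
    ring
  -- assemble
  have hN' : (N:ℝ) ≠ 0 := by positivity
  have hL0 : (L:ℝ) ≠ 0 := by positivity
  have hM'0 : (M':ℝ) ≠ 0 := by
    simp only [ne_eq, Nat.cast_eq_zero]
    omega
  push_cast
  rw [hsplit, Fin.sum_univ_castSucc, Finset.sum_congr rfl (fun k _ => hWmid k), hWlast,
      Finset.sum_add_distrib, Finset.sum_add_distrib, Finset.sum_const, Finset.card_univ,
      Fintype.card_fin, nsmul_eq_mul, hcount1, hcount2]
  simp only [hps']
  have hrhs1 : ∑ j ∈ Finset.Ico L (L + (l₂ - l₁)),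
        (((Finset.univ.filter (fun k => q k = j)).card : ℝ) / (M' : ℝ))
          * acorr3 L x ((j:ℤ) - l₂) ((j:ℤ) + l₁ - l₂)
      = (1 / ((M':ℝ) * L)) * ∑ j ∈ Finset.Ico L (L + (l₂ - l₁)),
          ((Finset.univ.filter (fun k => q k = j)).card : ℝ)
            * ((L:ℝ) * acorr3 L x ((j:ℤ) - l₂) ((j:ℤ) + l₁ - l₂)) := by
    rw [Finset.mul_sum]
    apply Finset.sum_congr rfl
    intro j _
    linear_combination (-(((Finset.univ.filter (fun k => q k = j)).card : ℝ) / (M':ℝ)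
      * acorr3 L x ((j:ℤ) - l₂) ((j:ℤ) + l₁ - l₂))) * mul_inv_cancel₀ hL0
  have hrhs2 : ∑ j ∈ Finset.Ico L (L + l₁),
        (((Finset.univ.filter (fun k => q k = j)).card : ℝ) / (M' : ℝ))
          * acorr3 L x ((l₂:ℤ) - l₁) ((j:ℤ) - l₁)
      = (1 / ((M':ℝ) * L)) * ∑ j ∈ Finset.Ico L (L + l₁),
          ((Finset.univ.filter (fun k => q k = j)).card : ℝ)
            * ((L:ℝ) * acorr3 L x ((l₂:ℤ) - l₁) ((j:ℤ) - l₁)) := by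
    rw [Finset.mul_sum]
    apply Finset.sum_congr rfl
    intro j _
    linear_combination (-(((Finset.univ.filter (fun k => q k = j)).card : ℝ) / (M':ℝ)
      * acorr3 L x ((l₂:ℤ) - l₁) ((j:ℤ) - l₁))) * mul_inv_cancel₀ hL0
  rw [hrhs1, hrhs2]
  field_simp
  ring
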